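/- Finite termination of Epanechnikov IRLS: with the setup of the Epanechnikov IRLS, if (O(θ_t)) is non-decreasing and takes finitely many values, then there exists τ such that O(θ_t) = O(θ_τ) for all t ≥ τ; and if additionally Σ_{i∈I_τ} x_i x_iᵀ is positive definite, then the identity O_M(θ_{τ+1}|θ_τ) - O_M(θ_τ|θ_τ) = (c_h/(n h^2)) (θ_{τ+1}-θ_τ)ᵀ (Σ_{i∈I_τ} x_i x_iᵀ)(θ_{τ+1}-θ_τ), together with O(θ_{τ+1}) - O(θ_τ) ≥ O_M(θ_{τ+1}|θ_τ) - O_M(θ_τ|θ_τ) ≥ 0 and O(θ_{τ+1}) = O(θ_τ), implies θ_{τ+1} = θ_τ. -/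

import Mathlib

open Matrix BigOperators

lemma quadform_sum_aux (p n : ℕ) (x : Fin n → Fin p → ℝ) (s : Finset (Fin n))
    (v : Fin p → ℝ) :
    v ⬝ᵥ (∑ i ∈ s, Matrix.vecMulVec (x i) (x i)).mulVec v = ∑ i ∈ s, (v ⬝ᵥ x i) ^ 2 := by
  have h1 : (∑ i ∈ s, Matrix.vecMulVec (x i) (x i)).mulVec v
      = ∑ i ∈ s, (Matrix.vecMulVec (x i) (x i)).mulVec v := by
    funext j
    simp only [Matrix.mulVec, dotProduct, Matrix.sum_apply, Finset.sum_apply,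
      Finset.sum_mul]
    exact Finset.sum_comm
  rw [h1]
  have h2 : v ⬝ᵥ (∑ i ∈ s, (Matrix.vecMulVec (x i) (x i)).mulVec v)
      = ∑ i ∈ s, v ⬝ᵥ (Matrix.vecMulVec (x i) (x i)).mulVec v := by
    simp only [dotProduct, Finset.sum_apply, Finset.mul_sum]
    exact Finset.sum_comm
  rw [h2]
  refine Finset.sum_congr rfl fun i _ => ?_
  simp only [Matrix.mulVec, dotProduct, Matrix.vecMulVec_apply, pow_two,
    Finset.mul_sum, Finset.sum_mul]
  refine Finset.sum_congr rfl fun j _ => Finset.sum_congr rfl fun k _ => by ring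

/-- Finite termination of Epanechnikov IRLS: if the objective sequence `(O(θ_t))` is
non-decreasing and takes finitely many values, then there exists `τ` with
`O(θ_t) = O(θ_τ)` for all `t ≥ τ`; and if moreover `Σ_{i∈I_τ} x_i x_iᵀ` is positive
definite, then the quadratic identity for the minorizer gap, together with
`O(θ_{τ+1}) - O(θ_τ) ≥ O_M(θ_{τ+1}|θ_τ) - O_M(θ_τ|θ_τ) ≥ 0` and
`O(θ_{τ+1}) = O(θ_τ)`, implies `θ_{τ+1} = θ_τ`. -/
theorem epanechnikov_irls_finite_termination (p n : ℕ) (hn : 0 < n)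
    (x : Fin n → Fin p → ℝ) (y : Fin n → ℝ) (h : ℝ) (hh : 0 < h)
    (I : (Fin p → ℝ) → Finset (Fin n))
    (hI : ∀ θv : Fin p → ℝ, I θv = Finset.univ.filter (fun i => |y i - θv ⬝ᵥ x i| ≤ h))
    (O : (Fin p → ℝ) → ℝ)
    (hO : ∀ θv : Fin p → ℝ, O θv = (3 / (4 * h)) * (I θv).card / n
      - (3 / (4 * h)) / (n * h ^ 2) * ∑ i ∈ I θv, (y i - θv ⬝ᵥ x i) ^ 2)
    (OM : (Fin p → ℝ) → (Fin p → ℝ) → ℝ)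
    (hOM : ∀ θv θ' : Fin p → ℝ, OM θv θ' = (3 / (4 * h)) * (I θ').card / n
      - (3 / (4 * h)) / (n * h ^ 2) * ∑ i ∈ I θ', (y i - θv ⬝ᵥ x i) ^ 2)
    (θ : ℕ → Fin p → ℝ)
    (hmax : ∀ t : ℕ, ∀ θ' : Fin p → ℝ, OM θ' (θ t) ≤ OM (θ (t + 1)) (θ t))
    (hmono : Monotone fun t : ℕ => O (θ t))
    (hfin : (Set.range fun t : ℕ => O (θ t)).Finite) :
    ∃ τ : ℕ, (∀ t : ℕ, τ ≤ t → O (θ t) = O (θ τ)) ∧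
      ((∑ i ∈ I (θ τ), Matrix.vecMulVec (x i) (x i)).PosDef →
        (OM (θ (τ + 1)) (θ τ) - OM (θ τ) (θ τ)
          = (3 / (4 * h)) / (n * h ^ 2) * ((θ (τ + 1) - θ τ) ⬝ᵥ
            (∑ i ∈ I (θ τ), Matrix.vecMulVec (x i) (x i)).mulVec (θ (τ + 1) - θ τ))) ∧
        θ (τ + 1) = θ τ) := by
  classical
  have hn' : (0:ℝ) < n := by exact_mod_cast hn
  have hc : (0:ℝ) < 3 / (4 * h) / (n * h ^ 2) := by positivity
  -- part 1: find τ
  have hne : hfin.toFinset.Nonempty := ⟨O (θ 0), by simp⟩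
  obtain ⟨τ, hτ⟩ : ∃ τ : ℕ, O (θ τ) = hfin.toFinset.max' hne := by
    have := hfin.toFinset.max'_mem hne
    rw [Set.Finite.mem_toFinset] at this
    obtain ⟨τ, hτ⟩ := this
    exact ⟨τ, hτ⟩
  have key : ∀ t : ℕ, τ ≤ t → O (θ t) = O (θ τ) := by
    intro t ht
    have h1 : O (θ t) ≤ hfin.toFinset.max' hne :=
      hfin.toFinset.le_max' _ (by rw [Set.Finite.mem_toFinset]; exact ⟨t, rfl⟩)
    have h2 : O (θ τ) ≤ O (θ t) := hmono ht
    rw [hτ] at h2 ⊢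
    linarith
  refine ⟨τ, key, ?_⟩
  intro hpd
  -- notation
  set g := θ τ with hg
  set q := θ (τ + 1) with hq
  set d : Fin p → ℝ := q - g with hd
  set S := I g with hS
  have hdx : ∀ i, d ⬝ᵥ x i = q ⬝ᵥ x i - g ⬝ᵥ x i := fun i => by rw [sub_dotProduct]
  set B := ∑ i ∈ S, (y i - q ⬝ᵥ x i) * (d ⬝ᵥ x i) with hB
  set A := ∑ i ∈ S, (d ⬝ᵥ x i) ^ 2 with hA
  have hA0 : 0 ≤ A := Finset.sum_nonneg fun i _ => sq_nonneg _
  -- q minimizes the weighted sum of squares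
  have hmin : ∀ θ' : Fin p → ℝ,
      ∑ i ∈ S, (y i - q ⬝ᵥ x i) ^ 2 ≤ ∑ i ∈ S, (y i - θ' ⬝ᵥ x i) ^ 2 := by
    intro θ'
    have hm := hmax τ θ'
    rw [hOM, hOM] at hm
    have h' : (3 / (4 * h) / (↑n * h ^ 2)) * ∑ i ∈ S, (y i - q ⬝ᵥ x i) ^ 2
        ≤ (3 / (4 * h) / (↑n * h ^ 2)) * ∑ i ∈ S, (y i - θ' ⬝ᵥ x i) ^ 2 := by linarith
    exact le_of_mul_le_mul_left h' hc
  -- expansion of the quadratic along direction d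
  have expand : ∀ ε : ℝ,
      ∑ i ∈ S, (y i - (q + ε • d) ⬝ᵥ x i) ^ 2
        = ∑ i ∈ S, (y i - q ⬝ᵥ x i) ^ 2 - 2 * ε * B + ε ^ 2 * A := by
    intro ε
    have h1 : ∀ i, (q + ε • d) ⬝ᵥ x i = q ⬝ᵥ x i + ε * (d ⬝ᵥ x i) := by
      intro i
      rw [add_dotProduct, smul_dotProduct, smul_eq_mul]
    calc ∑ i ∈ S, (y i - (q + ε • d) ⬝ᵥ x i) ^ 2
        = ∑ i ∈ S, ((y i - q ⬝ᵥ x i) ^ 2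
            - 2 * ε * ((y i - q ⬝ᵥ x i) * (d ⬝ᵥ x i)) + ε ^ 2 * (d ⬝ᵥ x i) ^ 2) :=
          Finset.sum_congr rfl fun i _ => by rw [h1 i]; ring
      _ = ∑ i ∈ S, (y i - q ⬝ᵥ x i) ^ 2 - 2 * ε * B + ε ^ 2 * A := by
          rw [Finset.sum_add_distrib, Finset.sum_sub_distrib, ← Finset.mul_sum,
            ← Finset.mul_sum, hB, hA]
  -- stationarity: B = 0
  have hB0 : B = 0 := by
    have hA1 : (0:ℝ) < A + 1 := by linarith
    have hε : (B / (A + 1)) * (A + 1) = B := div_mul_cancel₀ B (ne_of_gt hA1)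
    have hm := hmin (q + (B / (A + 1)) • d)
    rw [expand] at hm
    have h2 : 0 ≤ -(2 * (B / (A + 1)) * B) + (B / (A + 1)) ^ 2 * A := by linarith
    have h2' : 0 ≤ -(2 * (B / (A + 1)) * ((B / (A + 1)) * (A + 1)))
        + (B / (A + 1)) ^ 2 * A := by rw [hε]; exact h2
    have h5 : (B / (A + 1)) ^ 2 * (A + 2) ≤ 0 := by nlinarith [h2']
    have h6 : (B / (A + 1)) ^ 2 ≤ 0 := by nlinarith
    have h7 : B / (A + 1) = 0 :=
      sq_eq_zero_iff.mp (le_antisymm h6 (sq_nonneg _))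
    rw [← hε, h7, zero_mul]
  -- splitting of sum at g
  have hsplit : ∑ i ∈ S, (y i - g ⬝ᵥ x i) ^ 2
      = ∑ i ∈ S, (y i - q ⬝ᵥ x i) ^ 2 + 2 * B + A := by
    calc ∑ i ∈ S, (y i - g ⬝ᵥ x i) ^ 2
        = ∑ i ∈ S, ((y i - q ⬝ᵥ x i) ^ 2
            + 2 * ((y i - q ⬝ᵥ x i) * (d ⬝ᵥ x i)) + (d ⬝ᵥ x i) ^ 2) :=
          Finset.sum_congr rfl fun i _ => by rw [hdx i]; ring
      _ = _ := by
          rw [Finset.sum_add_distrib, Finset.sum_add_distrib, ← Finset.mul_sum, hB, hA]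
  -- the quadratic identity
  have hqf : d ⬝ᵥ (∑ i ∈ S, Matrix.vecMulVec (x i) (x i)).mulVec d = A :=
    quadform_sum_aux p n x S d
  have hident : OM q g - OM g g
      = (3 / (4 * h)) / (↑n * h ^ 2)
        * (d ⬝ᵥ (∑ i ∈ S, Matrix.vecMulVec (x i) (x i)).mulVec d) := by
    rw [hOM, hOM, hqf]
    linear_combination (3 / (4 * h) / (↑n * h ^ 2)) * hsplit
      + (2 * (3 / (4 * h) / (↑n * h ^ 2))) * hB0
  refine ⟨hident, ?_⟩
  -- minorization: OM q g ≤ O q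
  set u : Fin n → ℝ := fun i => 1 - (y i - q ⬝ᵥ x i) ^ 2 / h ^ 2 with hu
  have hform : ∀ (s : Finset (Fin n)),
      (3 / (4 * h)) * s.card / n - (3 / (4 * h)) / (n * h ^ 2)
          * ∑ i ∈ s, (y i - q ⬝ᵥ x i) ^ 2
        = 3 / (4 * h) / n * ∑ i ∈ s, u i := by
    intro s
    rw [hu]
    rw [Finset.sum_sub_distrib, Finset.sum_const, nsmul_eq_mul, mul_one, ← Finset.sum_div]
    field_simp
  have hmemq : ∀ i, i ∈ I q ↔ |y i - q ⬝ᵥ x i| ≤ h := by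
    intro i; rw [hI]; simp
  have hnn : ∀ i ∈ I q, 0 ≤ u i := by
    intro i hi
    rw [hmemq] at hi
    have h1 : (y i - q ⬝ᵥ x i) ^ 2 ≤ h ^ 2 := by
      rw [← sq_abs]
      exact pow_le_pow_left₀ (abs_nonneg _) hi 2
    have h2 : (y i - q ⬝ᵥ x i) ^ 2 / h ^ 2 ≤ 1 :=
      (div_le_one (by positivity)).mpr h1
    simp only [hu]
    linarith
  have hnp : ∀ i, i ∉ I q → u i ≤ 0 := by
    intro i hi
    rw [hmemq] at hi
    push_neg at hi
    have h1 : h ^ 2 ≤ (y i - q ⬝ᵥ x i) ^ 2 := by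
      have := pow_le_pow_left₀ hh.le hi.le 2
      rwa [sq_abs] at this
    have h2 : (1:ℝ) ≤ (y i - q ⬝ᵥ x i) ^ 2 / h ^ 2 :=
      (one_le_div (by positivity)).mpr h1
    simp only [hu]
    linarith
  have hsum_le : ∑ i ∈ S, u i ≤ ∑ i ∈ I q, u i := by
    have hsub : S ∩ I q ⊆ I q := Finset.inter_subset_right
    have h1 : ∑ i ∈ S ∩ I q, u i ≤ ∑ i ∈ I q, u i :=
      Finset.sum_le_sum_of_subset_of_nonneg hsub fun i hi _ => hnn i hi
    have h2 : ∑ i ∈ S \ (S ∩ I q), u i + ∑ i ∈ S ∩ I q, u i = ∑ i ∈ S, u i :=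
      Finset.sum_sdiff Finset.inter_subset_left
    have h3 : ∑ i ∈ S \ (S ∩ I q), u i ≤ 0 := by
      apply Finset.sum_nonpos
      intro i hi
      rw [Finset.mem_sdiff] at hi
      exact hnp i fun hiq => hi.2 (Finset.mem_inter.mpr ⟨hi.1, hiq⟩)
    linarith
  have hminor : OM q g ≤ O q := by
    rw [hOM, hO, hform, hform]
    have hcn : (0:ℝ) ≤ 3 / (4 * h) / n := by positivity
    exact mul_le_mul_of_nonneg_left hsum_le hcn
  have hOMgg : OM g g = O g := by rw [hOM, hO]
  have hOeq : O q = O g := key (τ + 1) (Nat.le_succ τ)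
  have hle : OM g g ≤ OM q g := hmax τ g
  have hOMeq : OM q g - OM g g = 0 := by linarith [hminor, hle, hOMgg, hOeq]
  have hqf0 : d ⬝ᵥ (∑ i ∈ S, Matrix.vecMulVec (x i) (x i)).mulVec d = 0 := by
    rw [hident] at hOMeq
    have := mul_eq_zero.mp hOMeq
    rcases this with h1 | h1
    · exact absurd h1 (ne_of_gt hc)
    · exact h1
  have hd0 : d = 0 := by
    by_contra hdne
    have := hpd.dotProduct_mulVec_pos hdne
    simp only [star_trivial] at this
    rw [hqf0] at this
    exact lt_irrefl 0 this
  rw [hd] at hd0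
  exact sub_eq_zero.mp hd0
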